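/- (Telescoping series lemma: interpolation implies observability.) Let T > 0 and C̃ > 0. Let F : (0,T] → [0,∞) be nonincreasing and let G : (0,T] → [0,∞) be Lebesgue measurable. Assume that for all 0 < t₁ < t₂ ≤ T and all ε > 0, F(t₂) ≤ ε^{−1} exp(2C̃(1 + 1/(t₂ − t₁))) G(t₂) + ε F(t₁). Then there exists a constant C_obs > 0, depending only on T and C̃, such that F(T) ≤ C_obs ∫_0^T G(s) ds. -/

import Mathlib

open MeasureTheory Real Set

set_option maxHeartbeats 1000000 in
/-- Telescoping series lemma: a Hölder-type interpolation inequality for a nonincreasing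
nonnegative function `F` implies an observability-type bound `F(T) ≤ C_obs ∫_0^T G`. -/
theorem telescoping_observability (T Ctilde : ℝ) (hT : 0 < T) (hC : 0 < Ctilde) :
    ∃ Cobs > 0, ∀ F G : ℝ → ℝ,
      (∀ t ∈ Set.Ioc (0 : ℝ) T, 0 ≤ F t) →
      AntitoneOn F (Set.Ioc (0 : ℝ) T) →
      (∀ t ∈ Set.Ioc (0 : ℝ) T, 0 ≤ G t) →
      Measurable G →
      (∀ t₁ t₂ : ℝ, 0 < t₁ → t₁ < t₂ → t₂ ≤ T → ∀ ε : ℝ, 0 < ε →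
        F t₂ ≤ ε⁻¹ * Real.exp (2 * Ctilde * (1 + 1 / (t₂ - t₁))) * G t₂ + ε * F t₁) →
      ENNReal.ofReal (F T) ≤
        ENNReal.ofReal Cobs * ∫⁻ s in Set.Ioc (0 : ℝ) T, ENNReal.ofReal (G s) := by
  set β : ℝ := 2 * Ctilde + (8 * Ctilde + 4) / T with hβdef
  have hβ : 0 < β := by positivity
  refine ⟨Real.exp (16 * β), Real.exp_pos _, ?_⟩
  intro F G hF0 hFanti hG0 hGmeas hFG
  by_cases htop : (∫⁻ s in Set.Ioc (0:ℝ) T, ENNReal.ofReal (G s)) = ⊤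
  · rw [htop, ENNReal.mul_top ((ENNReal.ofReal_pos.2 (Real.exp_pos _)).ne')]
    exact le_top
  -- G is integrable on (0, T]
  have hGae : 0 ≤ᵐ[volume.restrict (Set.Ioc (0:ℝ) T)] G :=
    (ae_restrict_iff' measurableSet_Ioc).2 (Filter.Eventually.of_forall hG0)
  have hGint : IntegrableOn G (Set.Ioc (0:ℝ) T) :=
    ⟨hGmeas.aestronglyMeasurable,
      (hasFiniteIntegral_iff_ofReal hGae).2 (lt_top_iff_ne_top.2 htop)⟩
  -- the sequence of times
  set a : ℕ → ℝ := fun k => T / 2 + T / (2 * ((k : ℝ) + 1)) with ha_def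
  set d : ℕ → ℝ := fun k => T / (2 * ((k : ℝ) + 1) * ((k : ℝ) + 2)) with hd_def
  set m : ℕ → ℝ := fun k => a (k + 1) + d k / 2 with hm_def
  set q : ℕ → ℝ := fun k => Real.exp (16 * β - β * ((k : ℝ) + 4) ^ 2) with hq_def
  have hq_pos : ∀ k : ℕ, 0 < q k := fun k => Real.exp_pos _
  have hd_pos : ∀ k : ℕ, 0 < d k := by
    intro k
    have : (0:ℝ) < (k:ℝ) + 1 := by positivity
    simp only [hd_def]
    positivity
  have ha_gap : ∀ k : ℕ, a k - a (k + 1) = d k := by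
    intro k
    simp only [ha_def, hd_def]
    push_cast
    have h1 : ((k:ℝ) + 1) ≠ 0 := by positivity
    have h2 : ((k:ℝ) + 2) ≠ 0 := by positivity
    field_simp
    ring
  have ha_half : ∀ k : ℕ, T / 2 < a k := by
    intro k
    have h1 : (0:ℝ) < T / (2 * ((k : ℝ) + 1)) := by positivity
    simp only [ha_def]
    linarith
  have ha_leT : ∀ k : ℕ, a k ≤ T := by
    intro k
    have h1 : (0:ℝ) < 2 := by norm_num
    have h2 : (2:ℝ) ≤ 2 * ((k:ℝ) + 1) := by
      have : (0:ℝ) ≤ (k:ℝ) := Nat.cast_nonneg k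
      nlinarith
    have h3 := div_le_div_of_nonneg_left hT.le h1 h2
    simp only [ha_def]
    linarith
  have ha0 : a 0 = T := by
    simp only [ha_def]
    norm_num
  have hq0 : q 0 = 1 := by
    have h1 : 16 * β - β * (((0:ℕ):ℝ) + 4) ^ 2 = 0 := by push_cast; ring
    simp only [hq_def]
    rw [h1, Real.exp_zero]
  have hqbd : ∀ N : ℕ, q N ≤ Real.exp (16 * β) * Real.exp (-β) ^ N := by
    intro N
    have h1 : q N ≤ Real.exp (16 * β - β * (N : ℝ)) := by
      simp only [hq_def]
      rw [Real.exp_le_exp]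
      have hn : (0:ℝ) ≤ (N:ℝ) := Nat.cast_nonneg N
      have hsq : (N:ℝ) ≤ ((N:ℝ) + 4) ^ 2 := by nlinarith
      nlinarith [mul_le_mul_of_nonneg_left hsq hβ.le]
    have h2 : Real.exp (16 * β - β * (N:ℝ)) =
        Real.exp (16 * β) * Real.exp (-β) ^ N := by
      rw [← Real.exp_nat_mul, ← Real.exp_add]
      ring_nf
    linarith [h1, h2.le, h2.ge]
  -- the key numeric inequality
  have hcoeff : ∀ N : ℕ,
      2 / d N * (q N * q N / q (N + 1)) *
        Real.exp (2 * Ctilde * (1 + 2 / d N)) ≤ Real.exp (16 * β) := by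
    intro N
    have hn : (0:ℝ) ≤ (N : ℝ) := Nat.cast_nonneg N
    set n : ℝ := (N : ℝ) with hn_def
    have h2d : 2 / d N = 4 * (n + 1) * (n + 2) / T := by
      simp only [hd_def, hn_def]
      field_simp
      ring
    have hP : (0:ℝ) < 4 * (n + 1) * (n + 2) / T := by positivity
    have hqq : q N * q N / q (N + 1) =
        Real.exp (16 * β - 2 * β * (n + 4) ^ 2 + β * (n + 5) ^ 2) := by
      simp only [hq_def, hn_def]
      rw [← Real.exp_add, ← Real.exp_sub]
      congr 1
      push_cast
      ring
    rw [h2d, hqq, mul_assoc]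
    set P : ℝ := 4 * (n + 1) * (n + 2) / T with hP_def
    have hPexp : P ≤ Real.exp P := by linarith [Real.add_one_le_exp P]
    have hPT : P * T = 4 * (n + 1) * (n + 2) := by
      rw [hP_def]; field_simp
    have hβT : β * T = 2 * Ctilde * T + 8 * Ctilde + 4 := by
      rw [hβdef]; field_simp; ring
    -- reduce to a polynomial inequality
    have key : P + 2 * Ctilde + 2 * Ctilde * P ≤ β * (n ^ 2 + 6 * n + 7) := by
      have h1 : (P + 2 * Ctilde + 2 * Ctilde * P) * T =
          (4 + 8 * Ctilde) * ((n + 1) * (n + 2)) + 2 * Ctilde * T := by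
        linear_combination (1 + 2 * Ctilde) * hPT
      have h2 : (β * (n ^ 2 + 6 * n + 7)) * T =
          (2 * Ctilde * T + 8 * Ctilde + 4) * (n ^ 2 + 6 * n + 7) := by
        linear_combination (n ^ 2 + 6 * n + 7) * hβT
      have h3 : (4 + 8 * Ctilde) * ((n + 1) * (n + 2)) + 2 * Ctilde * T ≤
          (2 * Ctilde * T + 8 * Ctilde + 4) * (n ^ 2 + 6 * n + 7) := by
        nlinarith [mul_nonneg (mul_nonneg hC.le hT.le) (mul_nonneg hn hn),
          mul_nonneg (mul_nonneg hC.le hT.le) hn, mul_nonneg hC.le hn,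
          hn,
          mul_nonneg hC.le hT.le]
      have h4 : (P + 2 * Ctilde + 2 * Ctilde * P) * T ≤
          (β * (n ^ 2 + 6 * n + 7)) * T := by rw [h1, h2]; exact h3
      exact le_of_mul_le_mul_right h4 hT
    calc P * (Real.exp (16 * β - 2 * β * (n + 4) ^ 2 + β * (n + 5) ^ 2) *
          Real.exp (2 * Ctilde * (1 + P)))
        ≤ Real.exp P * (Real.exp (16 * β - 2 * β * (n + 4) ^ 2 + β * (n + 5) ^ 2) *
          Real.exp (2 * Ctilde * (1 + P))) := by
          refine mul_le_mul_of_nonneg_right hPexp (le_of_lt ?_)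
          positivity
      _ = Real.exp (P + (16 * β - 2 * β * (n + 4) ^ 2 + β * (n + 5) ^ 2 +
          2 * Ctilde * (1 + P))) := by
          rw [← Real.exp_add, ← Real.exp_add]
      _ ≤ Real.exp (16 * β) := by
          rw [Real.exp_le_exp]
          nlinarith [key]
  -- from now on, the definitions are opaque
  clear_value a d m q
  have ha_pos : ∀ k : ℕ, 0 < a k := fun k => lt_trans (by positivity) (ha_half k)
  have ha_mem : ∀ k : ℕ, a k ∈ Set.Ioc (0:ℝ) T := fun k => ⟨ha_pos k, ha_leT k⟩
  have hm_lt : ∀ k : ℕ, m k < a k := by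
    intro k
    have h1 := ha_gap k
    have h2 := hd_pos k
    rw [hm_def]
    linarith
  have hm_gt : ∀ k : ℕ, a (k + 1) < m k := by
    intro k
    have h2 := hd_pos k
    rw [hm_def]
    linarith
  -- the one-step inequality
  have step : ∀ N : ℕ, q N * F (a N) ≤
      Real.exp (16 * β) * (∫ t in Set.Ioc (m N) (a N), G t) + q (N + 1) * F (a (N + 1)) := by
    intro N
    set ε : ℝ := q (N + 1) / q N with hε_def
    have hε : 0 < ε := div_pos (hq_pos _) (hq_pos _)
    set Mc : ℝ := Real.exp (2 * Ctilde * (1 + 2 / d N)) with hMc_def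
    have hMc : 0 < Mc := Real.exp_pos _
    clear_value ε Mc
    have hsub : Set.Ioc (m N) (a N) ⊆ Set.Ioc (0:ℝ) T := by
      intro t ht
      exact ⟨lt_trans (lt_trans (ha_pos (N+1)) (hm_gt N)) ht.1, ht.2.trans (ha_leT N)⟩
    -- pointwise inequality on the half interval
    have hpt : ∀ t ∈ Set.Ioc (m N) (a N),
        F (a N) ≤ ε⁻¹ * Mc * G t + ε * F (a (N + 1)) := by
      intro t ht
      have htmem : t ∈ Set.Ioc (0:ℝ) T := hsub ht
      have h1 : F (a N) ≤ F t := hFanti htmem (ha_mem N) ht.2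
      have hlt : a (N + 1) < t := lt_trans (hm_gt N) ht.1
      have h2 := hFG (a (N + 1)) t (ha_pos (N + 1)) hlt htmem.2 ε hε
      have hgap : d N / 2 ≤ t - a (N + 1) := by
        have h3 : m N < t := ht.1
        rw [hm_def] at h3
        linarith
      have hdh : (0:ℝ) < d N / 2 := by linarith [hd_pos N]
      have hexp : Real.exp (2 * Ctilde * (1 + 1 / (t - a (N + 1)))) ≤ Mc := by
        rw [hMc_def, Real.exp_le_exp]
        have h4 : 1 / (t - a (N + 1)) ≤ 1 / (d N / 2) :=
          one_div_le_one_div_of_le hdh hgap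
        rw [one_div_div] at h4
        nlinarith [mul_le_mul_of_nonneg_left h4 hC.le]
      have hGt : 0 ≤ G t := hG0 t htmem
      have hεinv : 0 ≤ ε⁻¹ := (inv_pos.2 hε).le
      have h6 : ε⁻¹ * Real.exp (2 * Ctilde * (1 + 1 / (t - a (N + 1)))) * G t ≤
          ε⁻¹ * Mc * G t :=
        mul_le_mul_of_nonneg_right (mul_le_mul_of_nonneg_left hexp hεinv) hGt
      linarith [h1, h2, h6]
    -- integrate the pointwise inequality
    have hmeasI : MeasurableSet (Set.Ioc (m N) (a N)) := measurableSet_Ioc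
    have hvol : volume (Set.Ioc (m N) (a N)) = ENNReal.ofReal (d N / 2) := by
      rw [Real.volume_Ioc]
      congr 1
      have h1 := ha_gap N
      rw [hm_def]
      linarith
    have hvol_lt : volume (Set.Ioc (m N) (a N)) < ⊤ := by
      rw [hvol]; exact ENNReal.ofReal_lt_top
    have hintG : IntegrableOn G (Set.Ioc (m N) (a N)) := hGint.mono_set hsub
    have hint_c : IntegrableOn (fun _ : ℝ => F (a N)) (Set.Ioc (m N) (a N)) :=
      integrableOn_const hvol_lt.ne
    have hint_rhs : IntegrableOn (fun t => ε⁻¹ * Mc * G t + ε * F (a (N + 1)))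
        (Set.Ioc (m N) (a N)) :=
      (hintG.const_mul _).add (integrableOn_const hvol_lt.ne)
    have hini := setIntegral_mono_on hint_c hint_rhs hmeasI hpt
    rw [setIntegral_const] at hini
    rw [integral_add (hintG.const_mul _) (integrableOn_const hvol_lt.ne),
      integral_const_mul, setIntegral_const, measureReal_def, hvol] at hini
    have htR : (ENNReal.ofReal (d N / 2)).toReal = d N / 2 :=
      ENNReal.toReal_ofReal (by linarith [hd_pos N])
    rw [htR] at hini
    simp only [smul_eq_mul] at hini
    -- hini : d N / 2 * F (a N) ≤ ε⁻¹ * Mc * ∫ G + d N / 2 * (ε * F (a (N+1)))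
    set J : ℝ := ∫ t in Set.Ioc (m N) (a N), G t with hJ_def
    have hJ0 : 0 ≤ J := by
      rw [hJ_def]; exact setIntegral_nonneg hmeasI fun t ht => hG0 t (hsub ht)
    clear_value J
    have hqN := hq_pos N
    have hqN1 := hq_pos (N + 1)
    have hdN := hd_pos N
    have hd0 : d N ≠ 0 := hdN.ne'
    have hq0' : q N ≠ 0 := hqN.ne'
    have hq1' : q (N + 1) ≠ 0 := hqN1.ne'
    -- multiply hini by 2 * q N / d N
    have hmul : q N * F (a N) ≤ (2 * q N / d N) * (ε⁻¹ * Mc) * J + q N * ε * F (a (N + 1)) := by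
      have hc : 0 < 2 * q N / d N := div_pos (by linarith) hdN
      have h7 := mul_le_mul_of_nonneg_left hini hc.le
      have he1 : 2 * q N / d N * (d N / 2 * F (a N)) = q N * F (a N) := by
        field_simp
      have he2 : 2 * q N / d N * (ε⁻¹ * Mc * J + d N / 2 * (ε * F (a (N + 1)))) =
          (2 * q N / d N) * (ε⁻¹ * Mc) * J + q N * ε * F (a (N + 1)) := by
        field_simp
      rw [he1, he2] at h7
      exact h7
    have hqε : q N * ε = q (N + 1) := by
      rw [hε_def]; field_simp
    have hcoefN : (2 * q N / d N) * (ε⁻¹ * Mc) ≤ Real.exp (16 * β) := by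
      have h1 : (2 * q N / d N) * (ε⁻¹ * Mc) =
          2 / d N * (q N * q N / q (N + 1)) * Mc := by
        rw [hε_def]
        field_simp
      rw [h1, hMc_def]
      exact hcoeff N
    have h8 : (2 * q N / d N) * (ε⁻¹ * Mc) * J ≤ Real.exp (16 * β) * J :=
      mul_le_mul_of_nonneg_right hcoefN hJ0
    rw [hqε] at hmul
    linarith [hmul, h8]
  -- telescoping induction
  have tele : ∀ N : ℕ, F T ≤
      Real.exp (16 * β) * (∫ t in Set.Ioc (a N) T, G t) + q N * F (a N) := by
    intro N
    induction N with
    | zero =>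
      rw [ha0, Set.Ioc_self, hq0]
      simp
    | succ N ih =>
      refine ih.trans ?_
      have hstep := step N
      have hJle : (∫ t in Set.Ioc (m N) (a N), G t) ≤
          ∫ t in Set.Ioc (a (N + 1)) (a N), G t := by
        refine setIntegral_mono_set (hGint.mono_set ?_) ?_ ?_
        · intro t ht
          exact ⟨lt_trans (ha_pos (N + 1)) ht.1, ht.2.trans (ha_leT N)⟩
        · refine (ae_restrict_iff' measurableSet_Ioc).2 (Filter.Eventually.of_forall ?_)
          intro t ht
          exact hG0 t ⟨lt_trans (ha_pos (N + 1)) ht.1, ht.2.trans (ha_leT N)⟩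
        · exact Filter.Eventually.of_forall
            (Set.Ioc_subset_Ioc_left (hm_gt N).le)
      have hunion : (∫ t in Set.Ioc (a (N + 1)) (a N), G t) +
          (∫ t in Set.Ioc (a N) T, G t) = ∫ t in Set.Ioc (a (N + 1)) T, G t := by
        rw [← setIntegral_union (Set.Ioc_disjoint_Ioc_of_le le_rfl) measurableSet_Ioc
          (hGint.mono_set ?_) (hGint.mono_set ?_)]
        · rw [Set.Ioc_union_Ioc_eq_Ioc ?_ (ha_leT N)]
          have hg := ha_gap N
          have hd := hd_pos N
          linarith
        · intro t ht
          exact ⟨lt_trans (ha_pos (N + 1)) ht.1, ht.2.trans (ha_leT N)⟩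
        · intro t ht
          exact ⟨lt_trans (ha_pos N) ht.1, ht.2⟩
      have hexp16 : (0:ℝ) < Real.exp (16 * β) := Real.exp_pos _
      calc Real.exp (16 * β) * (∫ t in Set.Ioc (a N) T, G t) + q N * F (a N)
          ≤ Real.exp (16 * β) * (∫ t in Set.Ioc (a N) T, G t) +
            (Real.exp (16 * β) * (∫ t in Set.Ioc (m N) (a N), G t) +
              q (N + 1) * F (a (N + 1))) := by linarith [hstep]
        _ ≤ Real.exp (16 * β) * (∫ t in Set.Ioc (a N) T, G t) +
            (Real.exp (16 * β) * (∫ t in Set.Ioc (a (N + 1)) (a N), G t) +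
              q (N + 1) * F (a (N + 1))) := by
            have h9 := mul_le_mul_of_nonneg_left hJle hexp16.le
            linarith
        _ = Real.exp (16 * β) * (∫ t in Set.Ioc (a (N + 1)) T, G t) +
              q (N + 1) * F (a (N + 1)) := by
            rw [← hunion]; ring
  -- pass to the limit
  set Ireal : ℝ := ∫ t in Set.Ioc (0:ℝ) T, G t with hI_def
  have hIbound : ∀ N : ℕ, (∫ t in Set.Ioc (a N) T, G t) ≤ Ireal := by
    intro N
    exact setIntegral_mono_set hGint hGae
      (Filter.Eventually.of_forall (Set.Ioc_subset_Ioc_left (ha_pos N).le))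
  have hT4 : T / 4 ∈ Set.Ioc (0:ℝ) T := ⟨by positivity, by linarith⟩
  have hFbd : ∀ N : ℕ, F (a N) ≤ F (T / 4) := by
    intro N
    refine hFanti hT4 (ha_mem N) ?_
    have := ha_half N
    linarith
  have hFnn : ∀ N : ℕ, 0 ≤ F (a N) := fun N => hF0 _ (ha_mem N)
  have hmain : F T ≤ Real.exp (16 * β) * Ireal := by
    have hr0 : (0:ℝ) ≤ Real.exp (-β) := (Real.exp_pos _).le
    have hr1 : Real.exp (-β) < 1 := Real.exp_lt_one_iff.2 (by linarith)
    refine le_of_forall_pos_le_add ?_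
    intro δ hδ
    set R : ℝ := Real.exp (16 * β) * (F (T / 4) + 1) with hR_def
    have hR : 0 < R := by
      have h10 := (hFnn 0).trans (hFbd 0)
      positivity
    obtain ⟨N, hN⟩ := exists_pow_lt_of_lt_one (div_pos hδ hR) hr1
    have htail : q N * F (a N) ≤ δ := by
      have h1 : q N * F (a N) ≤
          (Real.exp (16 * β) * Real.exp (-β) ^ N) * F (a N) :=
        mul_le_mul_of_nonneg_right (hqbd N) (hFnn N)
      have h2 : (Real.exp (16 * β) * Real.exp (-β) ^ N) * F (a N) ≤
          R * Real.exp (-β) ^ N := by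
        have hp : (0:ℝ) ≤ Real.exp (-β) ^ N := pow_nonneg hr0 N
        have h11 := hFbd N
        have ha : Real.exp (16 * β) * F (a N) ≤ Real.exp (16 * β) * (F (T / 4) + 1) :=
          mul_le_mul_of_nonneg_left (by linarith) (Real.exp_pos _).le
        calc Real.exp (16 * β) * Real.exp (-β) ^ N * F (a N)
            = (Real.exp (16 * β) * F (a N)) * Real.exp (-β) ^ N := by ring
          _ ≤ (Real.exp (16 * β) * (F (T / 4) + 1)) * Real.exp (-β) ^ N :=
              mul_le_mul_of_nonneg_right ha hp
          _ = R * Real.exp (-β) ^ N := by rw [hR_def]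
      have h3 : R * Real.exp (-β) ^ N ≤ δ := by
        have h12 := mul_le_mul_of_nonneg_left hN.le hR.le
        rw [mul_div_cancel₀ δ hR.ne'] at h12
        linarith
      linarith
    have h4 := mul_le_mul_of_nonneg_left (hIbound N) (Real.exp_pos (16 * β)).le
    have h5 := tele N
    linarith
  -- convert to ENNReal
  have hIeq : ENNReal.ofReal Ireal = ∫⁻ s in Set.Ioc (0:ℝ) T, ENNReal.ofReal (G s) :=
    ofReal_integral_eq_lintegral_ofReal hGint hGae
  calc ENNReal.ofReal (F T) ≤ ENNReal.ofReal (Real.exp (16 * β) * Ireal) :=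
        ENNReal.ofReal_le_ofReal hmain
    _ = ENNReal.ofReal (Real.exp (16 * β)) * ENNReal.ofReal Ireal :=
        ENNReal.ofReal_mul (Real.exp_pos _).le
    _ = ENNReal.ofReal (Real.exp (16 * β)) *
        ∫⁻ s in Set.Ioc (0:ℝ) T, ENNReal.ofReal (G s) := by rw [hIeq]
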